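/- arXiv:1404.5743 — 4 statements merged into one kernel-verified Lean document; each statement's English description precedes it below -/
import Mathlib

section
/- If a data structure problem f : X × Y → Z has (s,w,t)-certificates with t ≤ s, then f has (binom(s,t), w·t, 1)-certificates, where binom(s,t) is the binomial coefficient s choose t. -/
/-- `f` has `(s,w,t)`-certificates: there is a code `T : Y → Σ^s` with alphabet
`Σ = {0,1}^w` such that for every query `x` and database `y` some set `P` of at
most `t` cells determines the answer `f (x, y)`. -/
def HasCertificates {X Y Z : Type*} (f : X × Y → Z) (s w t : ℕ) : Prop :=
  ∃ T : Y → Fin s → (Fin w → Bool),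
    ∀ x : X, ∀ y : Y, ∃ P : Finset (Fin s), P.card ≤ t ∧
      ∀ y' : Y, (∀ i ∈ P, T y' i = T y i) → f (x, y') = f (x, y)

/-- If `f` has `(s,w,t)`-certificates with `t ≤ s`, then `f` has
`(C(s,t), w·t, 1)`-certificates. -/
theorem certificates_reduction_to_one_probe {X Y Z : Type*} [Fintype X] [Fintype Y]
    (f : X × Y → Z) (s w t : ℕ) (hts : t ≤ s)
    (hcert : HasCertificates f s w t) :
    HasCertificates f (s.choose t) (w * t) 1 := by
  obtain ⟨T, hT⟩ := hcert
  have hc : Fintype.card { S : Finset (Fin s) // S.card = t } = s.choose t := by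
    simp
  let e : { S : Finset (Fin s) // S.card = t } ≃ Fin (s.choose t) :=
    Fintype.equivFinOfCardEq hc
  -- new table: cell for a t-subset S packs the t cells of S
  refine ⟨fun y c j =>
    T y ((e.symm c).1.orderEmbOfFin (e.symm c).2 (finProdFinEquiv.symm j).2)
      (finProdFinEquiv.symm j).1, fun x y => ?_⟩
  obtain ⟨P, hPcard, hP⟩ := hT x y
  obtain ⟨S, hPS, -, hScard⟩ := Finset.exists_subsuperset_card_eq (Finset.subset_univ P)
    hPcard (by simpa using hts)
  refine ⟨{e ⟨S, hScard⟩}, by simp, fun y' h => ?_⟩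
  apply hP
  intro i hi
  have hcell := h (e ⟨S, hScard⟩) (Finset.mem_singleton_self _)
  have hiS : i ∈ S := hPS hi
  obtain ⟨k, hk⟩ : ∃ k : Fin t, S.orderEmbOfFin hScard k = i := by
    have : i ∈ Set.range ⇑(S.orderEmbOfFin hScard) := by
      rw [S.range_orderEmbOfFin hScard]; exact hiS
    exact this
  funext a
  have := congrFun hcell (finProdFinEquiv (a, k))
  simpa [e, Equiv.symm_apply_apply, hk] using this
end

section
/- Let f : X × Y → {0,1} be a problem on finite sets X and Y. Suppose f is (u,v)-rich (for positive reals u, v) and f has (s,w,t)-certificates with 1 ≤ t ≤ s. Then f contains a monochromatic 1-rectangle of size (u/binom(s,t)) × (v/(binom(s,t)·2^{w·t})), where binom(s,t) is the binomial coefficient s choose t. -/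
/-- `f` is `(u,v)`-rich: at least `v` databases have at least `u` positive queries. -/
def IsRich {X Y : Type*} [Fintype X] (f : X × Y → Fin 2) (u v : ℝ) : Prop :=
  ∃ B : Finset Y, v ≤ (B.card : ℝ) ∧
    ∀ y ∈ B, u ≤ ((Finset.univ.filter fun x : X => f (x, y) = 1).card : ℝ)

/-- `f` contains a monochromatic 1-rectangle of size `a × b`. -/
def HasOneRectangle {X Y : Type*} (f : X × Y → Fin 2) (a b : ℝ) : Prop :=
  ∃ (A : Finset X) (B : Finset Y), a ≤ (A.card : ℝ) ∧ b ≤ (B.card : ℝ) ∧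
    ∀ x ∈ A, ∀ y ∈ B, f (x, y) = 1

private lemma pigeon_real {α β : Type*} [DecidableEq β] (S : Finset α) (K : Finset β)
    (g : α → β) (hmap : ∀ a ∈ S, g a ∈ K) (c : ℝ) (hc : c ≤ S.card) (hK : K.Nonempty) :
    ∃ b ∈ K, c / K.card ≤ ((S.filter fun a => g a = b).card : ℝ) := by
  by_contra h
  push_neg at h
  have hKc : (0:ℝ) < K.card := by exact_mod_cast Finset.card_pos.mpr hK
  have hsum : (S.card : ℝ) = ∑ b ∈ K, ((S.filter fun a => g a = b).card : ℝ) := by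
    exact_mod_cast congrArg Nat.cast (Finset.card_eq_sum_card_fiberwise hmap)
  have hlt : (S.card : ℝ) < ∑ _b ∈ K, (c / K.card) := by
    rw [hsum]; exact Finset.sum_lt_sum_of_nonempty hK h
  rw [Finset.sum_const, nsmul_eq_mul] at hlt
  have h2 : (K.card:ℝ) * (c / K.card) = c := by field_simp
  linarith

/-- Richness lemma for data structure certificates: if `f` is `(u,v)`-rich and has
`(s,w,t)`-certificates with `1 ≤ t ≤ s`, then `f` contains a monochromatic 1-rectangle
of size `(u/C(s,t)) × (v/(C(s,t)·2^{w·t}))`. -/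
theorem richness_for_certificates {X Y : Type*} [Fintype X] [Fintype Y]
    (f : X × Y → Fin 2) (u v : ℝ) (hu : 0 < u) (hv : 0 < v)
    (hrich : IsRich f u v) (s w t : ℕ) (ht : 1 ≤ t) (hts : t ≤ s)
    (hcert : HasCertificates f s w t) :
    HasOneRectangle f (u / (s.choose t : ℝ)) (v / ((s.choose t : ℝ) * 2 ^ (w * t))) := by
  classical
  obtain ⟨T, hT⟩ := hcert
  obtain ⟨B, hBcard, hB⟩ := hrich
  -- certificates of exact size t
  have key : ∀ (x : X) (y : Y), ∃ P : Finset (Fin s), P.card = t ∧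
      ∀ y', (∀ i ∈ P, T y' i = T y i) → f (x, y') = f (x, y) := by
    intro x y
    obtain ⟨P, hPc, hP⟩ := hT x y
    obtain ⟨Q, hPQ, hQc⟩ := Finset.exists_superset_card_eq hPc
      (by simpa using hts)
    exact ⟨Q, hQc, fun y' h => hP y' fun i hi => h i (hPQ hi)⟩
  choose cert hcertc hcertp using key
  obtain ⟨P0, -, hP0c⟩ := Finset.exists_subset_card_eq
    (show t ≤ (Finset.univ : Finset (Fin s)).card by simpa [Finset.card_univ] using hts)
  have hP0mem : P0 ∈ Finset.powersetCard t (Finset.univ : Finset (Fin s)) :=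
    Finset.mem_powersetCard.mpr ⟨Finset.subset_univ _, hP0c⟩
  have hchoose : (0:ℝ) < (s.choose t : ℝ) := by exact_mod_cast Nat.choose_pos hts
  -- step 1: per database, a popular certificate set
  have step1 : ∀ y : Y, ∃ P : Finset (Fin s), P.card = t ∧ (y ∈ B →
      u / (s.choose t : ℝ) ≤
        ((Finset.univ.filter fun x : X => f (x, y) = 1 ∧ cert x y = P).card : ℝ)) := by
    intro y
    by_cases hy : y ∈ B
    · obtain ⟨P, hPmem, hPle⟩ := pigeon_real
        (Finset.univ.filter fun x : X => f (x, y) = 1)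
        (Finset.powersetCard t (Finset.univ : Finset (Fin s)))
        (fun x => cert x y)
        (fun x _ => Finset.mem_powersetCard.mpr ⟨Finset.subset_univ _, hcertc x y⟩)
        u (hB y hy)
        ⟨P0, hP0mem⟩
      refine ⟨P, (Finset.mem_powersetCard.mp hPmem).2, fun _ => ?_⟩
      rw [Finset.card_powersetCard, Finset.card_univ, Fintype.card_fin] at hPle
      simpa [Finset.filter_filter] using hPle
    · exact ⟨P0, hP0c, fun hy' => absurd hy' hy⟩
  choose Py hPyc hPyu using step1
  -- step 2: pigeonhole the databases by (certificate set, contents)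
  set N : Finset (Finset (Fin s) × (Fin t → Fin w → Bool)) :=
    (Finset.powersetCard t (Finset.univ : Finset (Fin s))) ×ˢ Finset.univ with hN
  have hNcard : (N.card : ℝ) = (s.choose t : ℝ) * 2 ^ (w * t) := by
    rw [hN, Finset.card_product, Finset.card_powersetCard, Finset.card_univ,
      Finset.card_univ, Fintype.card_fin]
    have : Fintype.card (Fin t → Fin w → Bool) = 2 ^ (w * t) := by
      rw [Fintype.card_fun, Fintype.card_fun, Fintype.card_fin, Fintype.card_fin,
        Fintype.card_bool, ← pow_mul, mul_comm]
    rw [this]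
    push_cast
    ring
  obtain ⟨⟨P, σ⟩, hPN, hfib⟩ := pigeon_real B N
    (fun y => (Py y, fun j => T y ((Py y).orderEmbOfFin (hPyc y) j)))
    (fun y _ => by
      exact Finset.mem_product.mpr ⟨Finset.mem_powersetCard.mpr
        ⟨Finset.subset_univ _, hPyc y⟩, Finset.mem_univ _⟩)
    v hBcard
    ⟨(P0, fun _ _ => false), Finset.mem_product.mpr ⟨hP0mem, Finset.mem_univ _⟩⟩
  rw [hNcard] at hfib
  set B' := B.filter fun y =>
    (Py y, fun j => T y ((Py y).orderEmbOfFin (hPyc y) j)) = (P, σ) with hB'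
  -- B' is nonempty
  have hNpos : (0:ℝ) < (s.choose t : ℝ) * 2 ^ (w * t) := by positivity
  have hB'pos : (0:ℝ) < (B'.card : ℝ) := lt_of_lt_of_le (by positivity) hfib
  have hB'ne : B'.Nonempty := Finset.card_pos.mp (by exact_mod_cast hB'pos)
  obtain ⟨y0, hy0⟩ := hB'ne
  obtain ⟨hy0B, hy0key⟩ := Finset.mem_filter.mp hy0
  have hPy0 : Py y0 = P := congrArg Prod.fst hy0key
  -- T-agreement on P for members of B'
  have hagree : ∀ y ∈ B', ∀ i ∈ P, T y i = T y0 i := by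
    intro y hy i hi
    obtain ⟨hyB, hykey⟩ := Finset.mem_filter.mp hy
    have hPy : Py y = P := congrArg Prod.fst hykey
    have hi' : i ∈ Set.range (P.orderEmbOfFin (hPy0 ▸ hPyc y0)) := by
      rw [Finset.range_orderEmbOfFin]; exact hi
    obtain ⟨j, hj⟩ := hi'
    have h1 : T y (P.orderEmbOfFin (hPy0 ▸ hPyc y0) j) = σ j := by
      have := congrFun (congrArg Prod.snd hykey) j
      simpa [hPy] using this
    have h2 : T y0 (P.orderEmbOfFin (hPy0 ▸ hPyc y0) j) = σ j := by
      have := congrFun (congrArg Prod.snd hy0key) j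
      simpa [hPy0] using this
    rw [← hj, h1, h2]
  refine ⟨Finset.univ.filter fun x : X => f (x, y0) = 1 ∧ cert x y0 = P, B', ?_, hfib, ?_⟩
  · have := hPyu y0 hy0B
    rwa [hPy0] at this
  · intro x hx y hy
    obtain ⟨hfx, hcx⟩ := (Finset.mem_filter.mp hx).2
    have := hcertp x y0 y (fun i hi => hagree y hy i (hcx ▸ hi))
    rw [this, hfx]
end

section
/- Let f_1,…,f_k : X × Y → {0,1} be problems on finite nonempty sets X and Y, let α, β ∈ (0,1], and suppose every f_i is (α|X|, β|Y|)-rich. If the direct-sum problem ⊕^k f̄ has (s,w,t)-certificates with 1 ≤ k·t ≤ s, then there exists an index i with 1 ≤ i ≤ k such that f_i contains a monochromatic 1-rectangle of size (α^3·|X| / binom(s,kt)^{3/k}) × (β^3·|Y| / (binom(s,kt)^{3/k}·2^{3·w·t})), where binom(s,kt) is the binomial coefficient s choose kt. -/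
/-- The direct-sum problem `⊕^k f̄ : ([k] × X) × Y^k → {0,1}`,
`⊕^k f̄ ((i,x), ȳ) = f_i (x, ȳ i)`. -/
def directSum {X Y : Type*} {k : ℕ} (f : Fin k → X × Y → Fin 2) :
    (Fin k × X) × (Fin k → Y) → Fin 2 :=
  fun p => f p.1.1 (p.1.2, p.2 p.1.1)

/-- The direct-product problem `∧^k f̄ : X^k × Y^k → {0,1}`,
`∧^k f̄ (x̄, ȳ) = ∏ i, f_i (x̄ i, ȳ i)`. -/
def directProd {X Y : Type*} {k : ℕ} (f : Fin k → X × Y → Fin 2) :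
    (Fin k → X) × (Fin k → Y) → Fin 2 :=
  fun p => ∏ i : Fin k, f i (p.1 i, p.2 i)

open Finset

lemma pigeon_aux {γ δ : Type*} [DecidableEq γ] [DecidableEq δ] (s : Finset γ) (hs : s.Nonempty)
    (g : γ → δ) :
    ∃ v ∈ s.image g, s.card ≤ (s.filter fun a => g a = v).card * (s.image g).card := by
  obtain ⟨v, hv, hmax⟩ := (s.image g).exists_max_image
    (fun v => (s.filter fun a => g a = v).card) (hs.image g)
  refine ⟨v, hv, ?_⟩
  calc s.card = ∑ b ∈ s.image g, (s.filter fun a => g a = b).card :=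
        card_eq_sum_card_fiberwise fun x hx => mem_image_of_mem _ hx
    _ ≤ (s.image g).card • (s.filter fun a => g a = v).card :=
        Finset.sum_le_card_nsmul _ _ _ (fun b hb => hmax b hb)
    _ = _ := by rw [smul_eq_mul, mul_comm]

lemma rpow_pow_aux {Nr : ℝ} (hN1 : 1 ≤ Nr) {k a : ℕ} (hk : 1 ≤ k) (hka : k ≤ 3 * a) :
    Nr ≤ (Nr ^ ((3:ℝ)/k)) ^ a := by
  have hN0 : (0:ℝ) ≤ Nr := le_trans zero_le_one hN1
  have hk0 : (0:ℝ) < k := by exact_mod_cast hk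
  have h1 : (Nr ^ ((3:ℝ)/k)) ^ a = Nr ^ (((3:ℝ)/k) * a) := by
    rw [← Real.rpow_natCast (Nr ^ ((3:ℝ)/k)) a, ← Real.rpow_mul hN0]
  rw [h1]
  nth_rewrite 1 [← Real.rpow_one Nr]
  apply Real.rpow_le_rpow_of_exponent_le hN1
  rw [div_mul_eq_mul_div, le_div_iff₀ hk0]
  have : (k:ℝ) ≤ 3 * a := by exact_mod_cast hka
  linarith

lemma core_aux (k : ℕ) (hk : 1 ≤ k) (α β Cr Nr : ℝ) (p q : Fin k → ℝ)
    (hα0 : 0 < α) (hα1 : α ≤ 1) (hβ0 : 0 < β) (hβ1 : β ≤ 1)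
    (hC1 : 1 ≤ Cr) (hCN : Cr ≤ Nr)
    (hp0 : ∀ i, 0 < p i) (hp1 : ∀ i, p i ≤ 1)
    (hq0 : ∀ i, 0 < q i) (hq1 : ∀ i, q i ≤ 1)
    (hP : α ^ k / Cr ≤ ∏ i, p i) (hQ : 1 / Nr ≤ ∏ i, q i) :
    ∃ i, α ^ 3 / Cr ^ ((3:ℝ)/k) ≤ p i ∧ β ^ 2 / Nr ^ ((3:ℝ)/k) ≤ q i := by
  classical
  have hN1 : 1 ≤ Nr := hC1.trans hCN
  have hN0 : 0 < Nr := lt_of_lt_of_le one_pos hN1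
  have hC0 : 0 < Cr := lt_of_lt_of_le one_pos hC1
  have hk0 : 0 < (k:ℝ) := by exact_mod_cast hk
  have hNr3 : (1:ℝ) ≤ Nr ^ ((3:ℝ)/k) := Real.one_le_rpow hN1 (by positivity)
  have hNr3' : (0:ℝ) < Nr ^ ((3:ℝ)/k) := lt_of_lt_of_le one_pos hNr3
  have hCr3 : (1:ℝ) ≤ Cr ^ ((3:ℝ)/k) := Real.one_le_rpow hC1 (by positivity)
  have hCr3' : (0:ℝ) < Cr ^ ((3:ℝ)/k) := lt_of_lt_of_le one_pos hCr3
  by_contra hcon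
  push_neg at hcon
  set Iq : Finset (Fin k) := univ.filter (fun i => q i < β^2 / Nr^((3:ℝ)/k)) with hIqdef
  set m := Iq.card with hmdef
  have hm : m ≤ k := by
    have := card_filter_le univ (fun i => q i < β^2 / Nr^((3:ℝ)/k))
    simpa [← hIqdef, ← hmdef] using this
  by_cases hcase : k ≤ 3 * m
  · -- q-side contradiction
    have hm1 : 1 ≤ m := by omega
    have hIqne : Iq.Nonempty := card_pos.mp (by omega)
    have h1 : (∏ i, q i) ≤ ∏ i ∈ Iq, q i := by
      have hsplit : (∏ i, q i) = (∏ i ∈ Iq, q i) * ∏ i ∈ univ.filter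
          (fun i => ¬ (q i < β^2 / Nr^((3:ℝ)/k))), q i := by
        rw [hIqdef, prod_filter_mul_prod_filter_not]
      rw [hsplit]
      exact mul_le_of_le_one_right (prod_nonneg fun i _ => (hq0 i).le)
        (prod_le_one (fun i _ => (hq0 i).le) (fun i _ => hq1 i))
    have h2 : (∏ i ∈ Iq, q i) < (β^2 / Nr^((3:ℝ)/k)) ^ m := by
      have := prod_lt_prod_of_nonempty (f := q) (g := fun _ => β^2 / Nr^((3:ℝ)/k))
        (fun i _ => hq0 i) (fun i hi => (mem_filter.mp hi).2) hIqne
      simpa only [prod_const] using this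
    have h3 : (β^2 / Nr^((3:ℝ)/k)) ^ m ≤ 1 / Nr := by
      calc (β^2 / Nr^((3:ℝ)/k)) ^ m ≤ (1 / Nr^((3:ℝ)/k)) ^ m := by
            apply pow_le_pow_left₀ (by positivity) ?_ m
            gcongr
            nlinarith
        _ = 1 / (Nr^((3:ℝ)/k)) ^ m := by rw [div_pow, one_pow]
        _ ≤ 1 / Nr := by
            apply one_div_le_one_div_of_le hN0
            exact rpow_pow_aux hN1 hk hcase
    linarith
  · -- p-side contradiction
    push_neg at hcase
    set Ip : Finset (Fin k) := univ.filter (fun i => ¬ (q i < β^2 / Nr^((3:ℝ)/k))) with hIpdef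
    have hIpcard : Ip.card = k - m := by
      have h := card_filter_add_card_filter_not (s := (univ : Finset (Fin k)))
        (p := fun i => q i < β^2 / Nr^((3:ℝ)/k))
      have hcu : (univ : Finset (Fin k)).card = k := by simp
      rw [← hIqdef] at h
      rw [hIpdef]
      omega
    have hkm1 : 1 ≤ k - m := by omega
    have hIpne : Ip.Nonempty := card_pos.mp (by omega)
    have hIpp : ∀ i ∈ Ip, p i < α^3 / Cr^((3:ℝ)/k) := by
      intro i hi
      by_contra hcontra
      push_neg at hcontra
      exact (mem_filter.mp hi).2 (hcon i hcontra)
    have h1 : (∏ i, p i) ≤ ∏ i ∈ Ip, p i := by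
      have hsplit : (∏ i, p i) = (∏ i ∈ univ.filter
          (fun i => q i < β^2 / Nr^((3:ℝ)/k)), p i) * ∏ i ∈ Ip, p i := by
        rw [hIpdef, prod_filter_mul_prod_filter_not]
      rw [hsplit]
      exact mul_le_of_le_one_left (prod_nonneg fun i _ => (hp0 i).le)
        (prod_le_one (fun i _ => (hp0 i).le) (fun i _ => hp1 i))
    have h2 : (∏ i ∈ Ip, p i) < (α^3 / Cr^((3:ℝ)/k)) ^ (k - m) := by
      have := prod_lt_prod_of_nonempty (f := p) (g := fun _ => α^3 / Cr^((3:ℝ)/k))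
        (fun i _ => hp0 i) (fun i hi => hIpp i hi) hIpne
      simpa only [prod_const, hIpcard] using this
    have h3 : (α^3 / Cr^((3:ℝ)/k)) ^ (k - m) ≤ α ^ k / Cr := by
      rw [div_pow]
      have hnum : (α^3) ^ (k - m) ≤ α ^ k := by
        rw [← pow_mul]
        exact pow_le_pow_of_le_one hα0.le hα1 (by omega)
      have hden : Cr ≤ (Cr^((3:ℝ)/k)) ^ (k - m) := rpow_pow_aux hC1 hk (by omega)
      exact div_le_div₀ (pow_nonneg hα0.le k) hnum hC0 hden
    linarith

private theorem directSum_richness_aux {X Y : Type*} [Fintype X] [Fintype Y] [Nonempty X] [Nonempty Y]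
    (k : ℕ) (f : Fin k → X × Y → Fin 2) (α β : ℝ)
    (hα0 : 0 < α) (hα1 : α ≤ 1) (hβ0 : 0 < β) (hβ1 : β ≤ 1)
    (hrich : ∀ i : Fin k, ∃ B : Finset Y, (β * Fintype.card Y : ℝ) ≤ B.card ∧
      ∀ y ∈ B, (α * Fintype.card X : ℝ) ≤
        ((Finset.univ.filter fun x : X => f i (x, y) = 1).card : ℝ))
    (s w t : ℕ) (hkt : 1 ≤ k * t) (hkts : k * t ≤ s)
    (T : (Fin k → Y) → Fin s → (Fin w → Bool))
    (hT : ∀ x : Fin k × X, ∀ y : Fin k → Y, ∃ P : Finset (Fin s), P.card ≤ t ∧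
      ∀ y' : Fin k → Y, (∀ i ∈ P, T y' i = T y i) →
        f x.1 (x.2, y' x.1) = f x.1 (x.2, y x.1)) :
    ∃ i : Fin k, ∃ (A : Finset X) (B : Finset Y),
      (α ^ 3 * Fintype.card X / ((s.choose (k * t) : ℝ)) ^ ((3 : ℝ) / k)) ≤ (A.card : ℝ) ∧
      (β ^ 3 * Fintype.card Y /
        (((s.choose (k * t) : ℝ)) ^ ((3 : ℝ) / k) * 2 ^ (3 * w * t))) ≤ (B.card : ℝ) ∧
      ∀ x ∈ A, ∀ y ∈ B, f i (x, y) = 1 := by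
  classical
  have hk : 1 ≤ k := by
    rcases Nat.eq_zero_or_pos k with h | h
    · subst h; simp at hkt
    · exact h
  choose Bf hB1 hB2 using hrich
  set nX : ℝ := (Fintype.card X : ℝ) with hnXdef
  set nY : ℝ := (Fintype.card Y : ℝ) with hnYdef
  have hnX : 0 < nX := by rw [hnXdef]; exact_mod_cast Fintype.card_pos
  have hnY : 0 < nY := by rw [hnYdef]; exact_mod_cast Fintype.card_pos
  have hBf0 : ∀ i, 0 < ((Bf i).card : ℝ) := fun i => lt_of_lt_of_le (by positivity) (hB1 i)
  -- combined padded certificates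
  have key : ∀ (xb : Fin k → X) (yb : Fin k → Y), ∃ Q : Finset (Fin s),
      Q.card = k * t ∧ ∀ yb' : Fin k → Y, (∀ j ∈ Q, T yb' j = T yb j) →
        ∀ i, f i (xb i, yb' i) = f i (xb i, yb i) := by
    intro xb yb
    choose P hPcard hPcert using fun i : Fin k => hT (i, xb i) yb
    have hU : (Finset.univ.biUnion P).card ≤ k * t := by
      refine le_trans Finset.card_biUnion_le ?_
      calc ∑ i, (P i).card ≤ ∑ _i : Fin k, t := Finset.sum_le_sum (fun i _ => hPcard i)
        _ = k * t := by simp [Finset.sum_const, mul_comm]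
    obtain ⟨Q, hQsub, hQcard⟩ := Finset.exists_superset_card_eq hU (by simpa)
    refine ⟨Q, hQcard, fun yb' hagree i => ?_⟩
    exact hPcert i yb'
      (fun j hj => hagree j (hQsub (Finset.mem_biUnion.mpr ⟨i, Finset.mem_univ i, hj⟩)))
  choose Qf hQcard hQcert using key
  set onesY : Fin k → Y → Finset X :=
    (fun i y => Finset.univ.filter fun x => f i (x, y) = 1) with honesY
  set Bbig : Finset (Fin k → Y) := Fintype.piFinset Bf with hBbigdef
  set ones : (Fin k → Y) → Finset (Fin k → X) :=
    (fun yb => Fintype.piFinset (fun i => onesY i (yb i))) with honesdef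
  set τ : (Fin k → X) → (Fin k → Y) → Finset (Fin s) × (Fin s → Fin w → Bool) :=
    (fun xb yb => (Qf xb yb, fun j => if j ∈ Qf xb yb then T yb j else fun _ => false)) with hτ
  set Cn : ℕ := s.choose (k * t) with hCndef
  set En : ℕ := 2 ^ (w * (k * t)) with hEndef
  have hCn1 : 1 ≤ Cn := Nat.choose_pos hkts
  have hEn1 : 1 ≤ En := Nat.one_le_two_pow
  -- ones lower bound
  have honescard : ∀ yb ∈ Bbig, ((α * nX) ^ k : ℝ) ≤ ((ones yb).card : ℝ) := by
    intro yb hyb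
    have h1 : ((ones yb).card : ℝ) = ∏ i : Fin k, ((onesY i (yb i)).card : ℝ) := by
      rw [honesdef]
      rw [Fintype.card_piFinset]
      push_cast
      rfl
    have h2 : ((α * nX) ^ k : ℝ) = ∏ _i : Fin k, (α * nX) := by
      simp [Finset.prod_const]
    rw [h1, h2]
    refine Finset.prod_le_prod (fun i _ => by positivity) (fun i _ => ?_)
    exact hB2 i (yb i) (Fintype.mem_piFinset.mp hyb i)
  have honesne : ∀ yb ∈ Bbig, (ones yb).Nonempty := by
    intro yb hyb
    rw [← Finset.card_pos]
    have := honescard yb hyb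
    have hpos : (0:ℝ) < (α * nX) ^ k := by positivity
    exact_mod_cast lt_of_lt_of_le hpos this
  -- step 1 : per-column pigeonhole
  have step1 : ∀ yb : Fin k → Y, ∃ v, yb ∈ Bbig →
      ((∃ xb ∈ ones yb, τ xb yb = v) ∧
        (ones yb).card ≤ ((ones yb).filter fun xb => τ xb yb = v).card * Cn) := by
    intro yb
    by_cases hyb : yb ∈ Bbig
    · obtain ⟨v, hv, hcount⟩ := pigeon_aux (ones yb) (honesne yb hyb) (fun xb => τ xb yb)
      refine ⟨v, fun _ => ⟨Finset.mem_image.mp hv, ?_⟩⟩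
      have himg : ((ones yb).image (fun xb => τ xb yb)) ⊆
          (Finset.univ.powersetCard (k * t)).image
            (fun Q => (Q, fun j => if j ∈ Q then T yb j else fun _ => false)) := by
        intro v hv
        obtain ⟨xb, hxb, rfl⟩ := Finset.mem_image.mp hv
        exact Finset.mem_image.mpr ⟨Qf xb yb,
          Finset.mem_powersetCard.mpr ⟨Finset.subset_univ _, hQcard xb yb⟩, by rw [hτ]⟩
      have hcard : ((ones yb).image (fun xb => τ xb yb)).card ≤ Cn := by
        refine le_trans (Finset.card_le_card himg) (le_trans Finset.card_image_le ?_)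
        rw [Finset.card_powersetCard]
        simp [hCndef]
      exact le_trans hcount (Nat.mul_le_mul_left _ hcard)
    · exact ⟨(∅, fun _ _ => false), fun h => absurd h hyb⟩
  choose τ1 hτ1 using step1
  -- Bbig lower bound
  have hBbigcard : ((β * nY) ^ k : ℝ) ≤ (Bbig.card : ℝ) := by
    have h1 : (Bbig.card : ℝ) = ∏ i : Fin k, ((Bf i).card : ℝ) := by
      rw [hBbigdef, Fintype.card_piFinset]; push_cast; rfl
    have h2 : ((β * nY) ^ k : ℝ) = ∏ _i : Fin k, (β * nY) := by
      simp [Finset.prod_const]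
    rw [h1, h2]
    exact Finset.prod_le_prod (fun i _ => by positivity) (fun i _ => hB1 i)
  have hBbigne : Bbig.Nonempty := by
    rw [← Finset.card_pos]
    have hpos : (0:ℝ) < (β * nY) ^ k := by positivity
    exact_mod_cast lt_of_lt_of_le hpos hBbigcard
  -- step 2 : pigeonhole over columns
  obtain ⟨τ₀, hτ₀img, hτ₀count⟩ := pigeon_aux Bbig hBbigne τ1
  have himg2 : (Bbig.image τ1).card ≤ Cn * En := by
    have hsub : Bbig.image τ1 ⊆ (Finset.univ.powersetCard (k * t)).biUnion
        (fun Q => (Finset.univ : Finset (Fin k → Y)).image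
          (fun yb => (Q, fun j => if j ∈ Q then T yb j else fun _ => false))) := by
      intro v hv
      obtain ⟨yb, hyb, rfl⟩ := Finset.mem_image.mp hv
      obtain ⟨⟨xb, hxbmem, hxbeq⟩, -⟩ := hτ1 yb hyb
      rw [← hxbeq]
      refine Finset.mem_biUnion.mpr ⟨Qf xb yb,
        Finset.mem_powersetCard.mpr ⟨Finset.subset_univ _, hQcard xb yb⟩,
        Finset.mem_image.mpr ⟨yb, Finset.mem_univ _, by rw [hτ]⟩⟩
    refine le_trans (Finset.card_le_card hsub) (le_trans Finset.card_biUnion_le ?_)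
    have hinner : ∀ Q ∈ Finset.univ.powersetCard (k * t),
        ((Finset.univ : Finset (Fin k → Y)).image
          (fun yb => (Q, fun j => if j ∈ Q then T yb j else fun _ => false))).card ≤ En := by
      intro Q hQ
      have hQc : Q.card = k * t := (Finset.mem_powersetCard.mp hQ).2
      have hcardfun : Fintype.card ({x // x ∈ Q} → Fin w → Bool) = En := by
        rw [Fintype.card_fun]
        rw [hEndef]
        rw [Fintype.card_coe, hQc]
        rw [Fintype.card_fun]
        simp [pow_mul]
      calc ((Finset.univ : Finset (Fin k → Y)).image
            (fun yb => (Q, fun j => if j ∈ Q then T yb j else fun _ => false))).card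
          ≤ (Finset.univ : Finset ({x // x ∈ Q} → Fin w → Bool)).card := by
            refine Finset.card_le_card_of_injOn
              (fun σp => fun j : {x // x ∈ Q} => σp.2 j.1)
              (fun _ _ => Finset.mem_univ _) ?_
            intro a ha b hb hab
            obtain ⟨ya, -, rfl⟩ := Finset.mem_image.mp ha
            obtain ⟨yc, -, rfl⟩ := Finset.mem_image.mp hb
            refine Prod.ext rfl ?_
            funext j
            by_cases hj : j ∈ Q
            · have := congrFun hab ⟨j, hj⟩
              simpa [hj] using this
            · simp [hj]
        _ ≤ En := by rw [Finset.card_univ, hcardfun]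
    refine le_trans (Finset.sum_le_sum hinner) ?_
    rw [Finset.sum_const, smul_eq_mul, Finset.card_powersetCard]
    apply Nat.mul_le_mul_right
    simp [hCndef]
  have hBcount : Bbig.card ≤ ((Bbig.filter fun yb => τ1 yb = τ₀).card) * (Cn * En) :=
    le_trans hτ₀count (Nat.mul_le_mul_left _ himg2)
  set B' := Bbig.filter (fun yb => τ1 yb = τ₀) with hB'def
  have hB'ne : B'.Nonempty := by
    rw [← Finset.card_pos]
    rcases Nat.eq_zero_or_pos B'.card with h | h
    · exfalso
      rw [h, zero_mul] at hBcount
      have : (0:ℝ) < Bbig.card := lt_of_lt_of_le (by positivity) hBbigcard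
      have : 0 < Bbig.card := by exact_mod_cast this
      omega
    · exact h
  obtain ⟨y₀, hy₀⟩ := hB'ne
  have hB'ne : B'.Nonempty := ⟨y₀, hy₀⟩
  have hy₀B : y₀ ∈ Bbig := (Finset.mem_filter.mp hy₀).1
  have hy₀τ : τ1 y₀ = τ₀ := (Finset.mem_filter.mp hy₀).2
  obtain ⟨⟨x₀, hx₀mem, hx₀eq⟩, hcount1⟩ := hτ1 y₀ hy₀B
  rw [hy₀τ] at hcount1 hx₀eq
  set 𝒜 := (ones y₀).filter (fun xb => τ xb y₀ = τ₀) with h𝒜def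
  have h𝒜ne : 𝒜.Nonempty := ⟨x₀, Finset.mem_filter.mpr ⟨hx₀mem, hx₀eq⟩⟩
  -- rectangle property
  have hrect : ∀ xb ∈ 𝒜, ∀ yb ∈ B', ∀ i : Fin k, f i (xb i, yb i) = 1 := by
    intro xb hxb yb hyb i
    obtain ⟨hxb1, hxb2⟩ := Finset.mem_filter.mp hxb
    obtain ⟨hyb1, hyb2⟩ := Finset.mem_filter.mp hyb
    obtain ⟨⟨xc, hxcmem, hxceq⟩, -⟩ := hτ1 yb hyb1
    have heq : τ xc yb = τ xb y₀ := by rw [hxceq, hyb2, ← hxb2]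
    have hQeq : Qf xc yb = Qf xb y₀ := congrArg Prod.fst heq
    have hagree : ∀ j ∈ Qf xb y₀, T yb j = T y₀ j := by
      intro j hj
      have h2 := congrFun (congrArg Prod.snd heq) j
      rw [hτ] at h2
      simp only at h2
      rw [hQeq] at h2
      rw [if_pos hj, if_pos hj] at h2
      exact h2
    rw [hQcert xb y₀ yb hagree i]
    have hmem := Fintype.mem_piFinset.mp ((honesdef ▸ hxb1 : xb ∈ Fintype.piFinset _)) i
    rw [honesY] at hmem
    simpa using (Finset.mem_filter.mp hmem).2
  -- projections
  set Pi : Fin k → Finset X := (fun i => 𝒜.image (fun xb => xb i)) with hPidef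
  set Ri : Fin k → Finset Y := (fun i => B'.image (fun yb => yb i)) with hRidef
  have hPine : ∀ i, (Pi i).Nonempty := fun i => h𝒜ne.image _
  have hRine : ∀ i, (Ri i).Nonempty := fun i => hB'ne.image _
  have hRsub : ∀ i, Ri i ⊆ Bf i := by
    intro i y hy
    obtain ⟨yb, hyb, rfl⟩ := Finset.mem_image.mp hy
    exact Fintype.mem_piFinset.mp (Finset.mem_filter.mp hyb).1 i
  have h𝒜card : 𝒜.card ≤ ∏ i, (Pi i).card := by
    have hsub : 𝒜 ⊆ Fintype.piFinset Pi := by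
      intro xb hxb
      exact Fintype.mem_piFinset.mpr (fun i => Finset.mem_image_of_mem _ hxb)
    exact le_trans (Finset.card_le_card hsub) (le_of_eq (Fintype.card_piFinset _))
  have hB'card : B'.card ≤ ∏ i, (Ri i).card := by
    have hsub : B' ⊆ Fintype.piFinset Ri := by
      intro yb hyb
      exact Fintype.mem_piFinset.mpr (fun i => Finset.mem_image_of_mem _ hyb)
    exact le_trans (Finset.card_le_card hsub) (le_of_eq (Fintype.card_piFinset _))
  -- real quantities
  set pr : Fin k → ℝ := (fun i => ((Pi i).card : ℝ) / nX) with hprdef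
  set qr : Fin k → ℝ := (fun i => ((Ri i).card : ℝ) / ((Bf i).card : ℝ)) with hqrdef
  have hp0 : ∀ i, 0 < pr i := by
    intro i
    have : 0 < (Pi i).card := Finset.card_pos.mpr (hPine i)
    rw [hprdef]
    have h2 : (0:ℝ) < (Pi i).card := by exact_mod_cast this
    exact div_pos h2 hnX
  have hp1 : ∀ i, pr i ≤ 1 := by
    intro i
    rw [hprdef]
    apply div_le_one_of_le₀ ?_ hnX.le
    rw [hnXdef]
    exact_mod_cast Finset.card_le_univ _
  have hq0 : ∀ i, 0 < qr i := by
    intro i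
    have : 0 < (Ri i).card := Finset.card_pos.mpr (hRine i)
    rw [hqrdef]
    have h2 : (0:ℝ) < (Ri i).card := by exact_mod_cast this
    exact div_pos h2 (hBf0 i)
  have hq1 : ∀ i, qr i ≤ 1 := by
    intro i
    rw [hqrdef]
    apply div_le_one_of_le₀ ?_ (hBf0 i).le
    exact_mod_cast Finset.card_le_card (hRsub i)
  have hcount1R : ((α * nX) ^ k : ℝ) ≤ (∏ i, ((Pi i).card : ℝ)) * Cn := by
    refine le_trans (honescard y₀ hy₀B) ?_
    have : (ones y₀).card ≤ (∏ i, (Pi i).card) * Cn :=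
      le_trans hcount1 (Nat.mul_le_mul_right _ h𝒜card)
    calc ((ones y₀).card : ℝ) ≤ (((∏ i, (Pi i).card) * Cn : ℕ) : ℝ) := by exact_mod_cast this
      _ = (∏ i, ((Pi i).card : ℝ)) * Cn := by push_cast; ring
  have hcountBR : (Bbig.card : ℝ) ≤ (∏ i, ((Ri i).card : ℝ)) * (Cn * En) := by
    have : Bbig.card ≤ (∏ i, (Ri i).card) * (Cn * En) :=
      le_trans hBcount (Nat.mul_le_mul_right _ hB'card)
    calc (Bbig.card : ℝ) ≤ (((∏ i, (Ri i).card) * (Cn * En) : ℕ) : ℝ) := by exact_mod_cast this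
      _ = (∏ i, ((Ri i).card : ℝ)) * (Cn * En) := by push_cast; ring
  have hCn1R : (1:ℝ) ≤ (Cn:ℝ) := by exact_mod_cast hCn1
  have hEn1R : (1:ℝ) ≤ (En:ℝ) := by exact_mod_cast hEn1
  have hPreal : α ^ k / (Cn:ℝ) ≤ ∏ i, pr i := by
    rw [hprdef]
    rw [Finset.prod_div_distrib, Finset.prod_const]
    rw [div_le_div_iff₀ (by positivity) (by positivity)]
    calc α ^ k * nX ^ (Finset.univ : Finset (Fin k)).card = (α * nX) ^ k := by
          simp [mul_pow]
      _ ≤ (∏ i, ((Pi i).card : ℝ)) * Cn := hcount1R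
  have hQreal : 1 / ((Cn:ℝ) * En) ≤ ∏ i, qr i := by
    rw [hqrdef]
    rw [Finset.prod_div_distrib]
    have hBbigprod : (Bbig.card : ℝ) = ∏ i, ((Bf i).card : ℝ) := by
      rw [hBbigdef, Fintype.card_piFinset]; push_cast; rfl
    have hprodpos : (0:ℝ) < ∏ i, ((Bf i).card : ℝ) := Finset.prod_pos (fun i _ => hBf0 i)
    rw [div_le_div_iff₀ (by positivity) hprodpos]
    rw [one_mul, ← hBbigprod]
    calc (Bbig.card : ℝ) ≤ (∏ i, ((Ri i).card : ℝ)) * (Cn * En) := hcountBR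
      _ = (∏ i, ((Ri i).card : ℝ)) * ((Cn:ℝ) * En) := by push_cast; ring
  obtain ⟨i, hpi, hqi⟩ := core_aux k hk α β (Cn:ℝ) ((Cn:ℝ) * En) pr qr hα0 hα1 hβ0 hβ1
    hCn1R (le_mul_of_one_le_right (by positivity) hEn1R) hp0 hp1 hq0 hq1 hPreal hQreal
  refine ⟨i, Pi i, Ri i, ?_, ?_, ?_⟩
  · -- α side
    have hD : (0:ℝ) < (Cn:ℝ) ^ ((3:ℝ)/k) := Real.rpow_pos_of_pos (by positivity) _
    calc α ^ 3 * nX / (Cn:ℝ) ^ ((3:ℝ)/k) = (α ^ 3 / (Cn:ℝ) ^ ((3:ℝ)/k)) * nX := by ring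
      _ ≤ pr i * nX := mul_le_mul_of_nonneg_right hpi hnX.le
      _ = ((Pi i).card : ℝ) := by rw [hprdef]; exact div_mul_cancel₀ _ hnX.ne'
  · -- β side
    have hNrpow : ((Cn:ℝ) * En) ^ ((3:ℝ)/k) = (Cn:ℝ) ^ ((3:ℝ)/k) * 2 ^ (3 * w * t) := by
      rw [Real.mul_rpow (by positivity) (by positivity)]
      congr 1
      rw [hEndef]
      push_cast
      rw [← Real.rpow_natCast 2 (w * (k * t)), ← Real.rpow_natCast 2 (3 * w * t),
        ← Real.rpow_mul (by norm_num)]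
      congr 1
      have hk0 : ((k:ℝ)) ≠ 0 := by positivity
      push_cast
      field_simp
    have hD : (0:ℝ) < ((Cn:ℝ) * En) ^ ((3:ℝ)/k) := Real.rpow_pos_of_pos (by positivity) _
    calc β ^ 3 * nY / ((Cn:ℝ) ^ ((3:ℝ)/k) * 2 ^ (3 * w * t))
        = (β ^ 2 / (((Cn:ℝ) * En) ^ ((3:ℝ)/k))) * (β * nY) := by rw [hNrpow]; ring
      _ ≤ (β ^ 2 / (((Cn:ℝ) * En) ^ ((3:ℝ)/k))) * ((Bf i).card : ℝ) :=
          mul_le_mul_of_nonneg_left (hB1 i) (by positivity)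
      _ ≤ qr i * ((Bf i).card : ℝ) := mul_le_mul_of_nonneg_right hqi (hBf0 i).le
      _ = ((Ri i).card : ℝ) := by rw [hqrdef]; exact div_mul_cancel₀ _ (hBf0 i).ne'
  · intro x hx y hy
    obtain ⟨xb, hxb, rfl⟩ := Finset.mem_image.mp hx
    obtain ⟨yb, hyb, rfl⟩ := Finset.mem_image.mp hy
    exact hrect xb hxb yb hyb i

/-- Direct-sum richness lemma for certificates: if every `f i` is `(α|X|, β|Y|)`-rich
with `α, β ∈ (0,1]` and the direct-sum problem `⊕^k f̄` has `(s,w,t)`-certificates with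
`1 ≤ k·t ≤ s`, then some `f i` contains a monochromatic 1-rectangle of size
`(α³|X| / C(s,kt)^{3/k}) × (β³|Y| / (C(s,kt)^{3/k}·2^{3wt}))`. -/
theorem directSum_richness {X Y : Type*} [Fintype X] [Fintype Y] [Nonempty X] [Nonempty Y]
    (k : ℕ) (f : Fin k → X × Y → Fin 2) (α β : ℝ)
    (hα0 : 0 < α) (hα1 : α ≤ 1) (hβ0 : 0 < β) (hβ1 : β ≤ 1)
    (hrich : ∀ i : Fin k, IsRich (f i) (α * Fintype.card X) (β * Fintype.card Y))
    (s w t : ℕ) (hkt : 1 ≤ k * t) (hkts : k * t ≤ s)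
    (hcert : HasCertificates (directSum f) s w t) :
    ∃ i : Fin k, HasOneRectangle (f i)
      (α ^ 3 * Fintype.card X / ((s.choose (k * t) : ℝ)) ^ ((3 : ℝ) / k))
      (β ^ 3 * Fintype.card Y /
        (((s.choose (k * t) : ℝ)) ^ ((3 : ℝ) / k) * 2 ^ (3 * w * t))) := by
  obtain ⟨T, hT⟩ := hcert
  have hT' : ∀ x : Fin k × X, ∀ y : Fin k → Y, ∃ P : Finset (Fin s), P.card ≤ t ∧
      ∀ y' : Fin k → Y, (∀ i ∈ P, T y' i = T y i) →
        f x.1 (x.2, y' x.1) = f x.1 (x.2, y x.1) := by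
    intro x y
    obtain ⟨P, h1, h2⟩ := hT x y
    exact ⟨P, h1, fun y' ha => h2 y' ha⟩
  obtain ⟨i, A, B, h1, h2, h3⟩ := directSum_richness_aux k f α β hα0 hα1 hβ0 hβ1 hrich
    s w t hkt hkts T hT'
  exact ⟨i, A, B, h1, h2, h3⟩
end

section
/- Consider the lopsided set disjointness problem f on a universe U of size N·B (with N, B ≥ 1), where queries are the N-element subsets S ⊆ U, databases are arbitrary subsets T ⊆ U, and f(S,T) = 1 if and only if S ∩ T = ∅. For every integer M ≥ N: if A is a family of N-element subsets and B is a family of subsets of U such that S ∩ T = ∅ for every S ∈ A and T ∈ B, and |A| ≥ binom(M,N), then |B| ≤ 2^{N·B − M}. -/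
lemma choose_strict_top (N u M : ℕ) (hN : 1 ≤ N) (hM : N ≤ M) (hu : u < M) :
    u.choose N < M.choose N := by
  obtain ⟨m, rfl⟩ : ∃ m, M = m + 1 := ⟨M - 1, by omega⟩
  obtain ⟨k, rfl⟩ : ∃ k, N = k + 1 := ⟨N - 1, by omega⟩
  calc u.choose (k+1) ≤ m.choose (k+1) := Nat.choose_le_choose _ (by omega)
    _ < m.choose k + m.choose (k+1) := by
        have : 0 < m.choose k := Nat.choose_pos (by omega)
        omega
    _ = (m+1).choose (k+1) := (Nat.choose_succ_succ m k).symm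

/-- LSD rectangle bound: on a universe of size `N·B`, if `𝒜` is a family of `N`-element
subsets and `ℬ` a family of arbitrary subsets such that every `S ∈ 𝒜` is disjoint from
every `T ∈ ℬ` (i.e. `𝒜 × ℬ` is a monochromatic 1-rectangle of lopsided set disjointness),
and `|𝒜| ≥ C(M,N)` for some `M ≥ N`, then `|ℬ| ≤ 2^{N·B − M}`. -/
theorem lsd_rectangle_bound (N B : ℕ) (hN : 1 ≤ N) (hB : 1 ≤ B) (M : ℕ) (hM : N ≤ M)
    (𝒜 ℬ : Finset (Finset (Fin (N * B))))
    (h𝒜 : ∀ S ∈ 𝒜, S.card = N)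
    (hone : ∀ S ∈ 𝒜, ∀ T ∈ ℬ, Disjoint S T)
    (hcard : M.choose N ≤ 𝒜.card) :
    (ℬ.card : ℝ) ≤ 2 ^ ((N * B : ℤ) - M) := by
  set U : Finset (Fin (N * B)) := 𝒜.biUnion id with hU
  -- 𝒜 ⊆ powersetCard N U
  have hsub : 𝒜 ⊆ U.powersetCard N := by
    intro S hS
    rw [Finset.mem_powersetCard]
    exact ⟨fun x hx => Finset.mem_biUnion.2 ⟨S, hS, hx⟩, h𝒜 S hS⟩
  have h1 : 𝒜.card ≤ U.card.choose N := by
    simpa [Finset.card_powersetCard] using Finset.card_le_card hsub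
  have hMu : M ≤ U.card := by
    by_contra h
    exact absurd (le_trans hcard h1)
      (not_le.2 (choose_strict_top N U.card M hN hM (by omega)))
  have hUle : U.card ≤ N * B := by
    simpa using Finset.card_le_card (Finset.subset_univ U)
  -- every T ∈ ℬ is a subset of Uᶜ
  have hBsub : ℬ ⊆ Uᶜ.powerset := by
    intro T hT
    rw [Finset.mem_powerset]
    intro x hx
    rw [Finset.mem_compl]
    intro hxU
    obtain ⟨S, hS, hxS⟩ := Finset.mem_biUnion.1 hxU
    exact (Finset.disjoint_left.1 (hone S hS T hT)) hxS hx
  have h2 : ℬ.card ≤ 2 ^ (N * B - U.card) := by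
    have := Finset.card_le_card hBsub
    rwa [Finset.card_powerset, Finset.card_compl, Fintype.card_fin] at this
  have h3 : ℬ.card ≤ 2 ^ (N * B - M) :=
    h2.trans (Nat.pow_le_pow_right (by norm_num) (by omega))
  have hMN : M ≤ N * B := le_trans hMu hUle
  have : ((N * B : ℤ) - M) = ((N * B - M : ℕ) : ℤ) := by omega
  rw [this, zpow_natCast]
  calc (ℬ.card : ℝ) ≤ ((2 ^ (N * B - M) : ℕ) : ℝ) := by exact_mod_cast h3
    _ = 2 ^ (N * B - M) := by push_cast; ring
end
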